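/- Let V = EuclideanSpace ℝ (Fin n), Ω ⊆ V a nonempty proper open convex cone, and φ the characteristic function of Ω. Then for every linear automorphism g ∈ GL(V) with g·Ω = Ω and every ω ∈ Ω, one has φ(g·ω) = |det g|⁻¹ · φ(ω). -/

import Mathlib

open Set Filter
open scoped Pointwise RealInnerProductSpace

/-- A subset `C` of a real vector space is a cone if `t • x ∈ C` for all `x ∈ C`, `t > 0`. -/
def IsCone {V : Type*} [AddCommGroup V] [Module ℝ V] (C : Set V) : Prop :=
  ∀ x ∈ C, ∀ t : ℝ, 0 < t → t • x ∈ C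

/-- The open dual cone of an open cone `Ω` with respect to the inner product. -/
def openDualCone {V : Type*} [NormedAddCommGroup V] [InnerProductSpace ℝ V] (Ω : Set V) :
    Set V :=
  {v | ∀ ω ∈ closure Ω, ω ≠ 0 → 0 < ⟪v, ω⟫}

open MeasureTheory

/-- The characteristic function of a proper open convex cone `Ω ⊆ EuclideanSpace ℝ (Fin n)`:
`φ(ω) = ∫_{Ω*} exp (−⟪ω, y⟫) dy`, the integral over the open dual cone with respect to
Lebesgue measure. -/
noncomputable def charFun {n : ℕ} (Ω : Set (EuclideanSpace ℝ (Fin n)))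
    (ω : EuclideanSpace ℝ (Fin n)) : ℝ :=
  ∫ y in openDualCone Ω, Real.exp (-⟪ω, y⟫)

theorem stmt_4 {n : ℕ} (Ω : Set (EuclideanSpace ℝ (Fin n)))
    (hne : Ω.Nonempty) (hopen : IsOpen Ω) (hconv : Convex ℝ Ω)
    (hcone : IsCone Ω) (hproper : closure Ω ∩ -closure Ω = {0})
    (g : EuclideanSpace ℝ (Fin n) ≃ₗ[ℝ] EuclideanSpace ℝ (Fin n))
    (hg : ⇑g '' Ω = Ω) (ω : EuclideanSpace ℝ (Fin n)) (hω : ω ∈ Ω) :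
    charFun Ω (g ω) = |LinearMap.det (g : EuclideanSpace ℝ (Fin n) →ₗ[ℝ]
      EuclideanSpace ℝ (Fin n))|⁻¹ * charFun Ω ω := by
  classical
  set A : EuclideanSpace ℝ (Fin n) →ₗ[ℝ] EuclideanSpace ℝ (Fin n) :=
    LinearMap.adjoint (g : EuclideanSpace ℝ (Fin n) →ₗ[ℝ] EuclideanSpace ℝ (Fin n)) with hA
  set B : EuclideanSpace ℝ (Fin n) →ₗ[ℝ] EuclideanSpace ℝ (Fin n) :=
    LinearMap.adjoint (g.symm : EuclideanSpace ℝ (Fin n) →ₗ[ℝ] EuclideanSpace ℝ (Fin n)) with hB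
  have hAB : A ∘ₗ B = LinearMap.id := by
    refine LinearMap.ext fun x => ?_
    apply ext_inner_right ℝ
    intro y
    simp [hA, hB, LinearMap.adjoint_inner_left]
  have hBA : B ∘ₗ A = LinearMap.id := by
    refine LinearMap.ext fun x => ?_
    apply ext_inner_right ℝ
    intro y
    simp [hA, hB, LinearMap.adjoint_inner_left]
  set Aeq : EuclideanSpace ℝ (Fin n) ≃ₗ[ℝ] EuclideanSpace ℝ (Fin n) :=
    LinearEquiv.ofLinear A B hAB hBA with hAeq
  -- determinants
  have hdetA : LinearMap.det A =
      LinearMap.det (g : EuclideanSpace ℝ (Fin n) →ₗ[ℝ] EuclideanSpace ℝ (Fin n)) := by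
    have b := EuclideanSpace.basisFun (Fin n) ℝ
    rw [hA, ← LinearMap.det_toMatrix b.toBasis,
      LinearMap.toMatrix_adjoint, Matrix.det_conjTranspose,
      LinearMap.det_toMatrix]
    simp [starRingEnd_apply]
  have hdetg : LinearMap.det (g : EuclideanSpace ℝ (Fin n) →ₗ[ℝ] EuclideanSpace ℝ (Fin n)) ≠ 0 := by
    intro h
    have := LinearEquiv.isUnit_det' g
    rw [h] at this
    exact not_isUnit_zero this
  have hdetA0 : LinearMap.det A ≠ 0 := by rw [hdetA]; exact hdetg
  -- g maps the closure of Ω onto itself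
  have hgc : ∀ x ∈ closure Ω, g x ∈ closure Ω := by
    intro x hx
    have := (g.toContinuousLinearEquiv.toHomeomorph.image_closure Ω)
    rw [show ⇑g.toContinuousLinearEquiv.toHomeomorph = ⇑g from rfl, hg] at this
    rw [← this]
    exact mem_image_of_mem _ hx
  have hgc' : ∀ x ∈ closure Ω, g.symm x ∈ closure Ω := by
    intro x hx
    have h2 : ⇑g.symm '' Ω = Ω := by
      calc ⇑g.symm '' Ω = ⇑g.symm '' (⇑g '' Ω) := by rw [hg]
        _ = Ω := Equiv.symm_image_image g.toEquiv Ω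
    have := (g.symm.toContinuousLinearEquiv.toHomeomorph.image_closure Ω)
    rw [show ⇑g.symm.toContinuousLinearEquiv.toHomeomorph = ⇑g.symm from rfl, h2] at this
    rw [← this]
    exact mem_image_of_mem _ hx
  -- the adjoint preserves the open dual cone
  have hpre : ⇑Aeq ⁻¹' (openDualCone Ω) = openDualCone Ω := by
    ext y
    constructor
    · intro hy x hx hx0
      have h1 : g.symm x ∈ closure Ω := hgc' x hx
      have h2 : g.symm x ≠ 0 := by
        intro h; apply hx0
        have := congrArg g h
        simpa using this
      have := hy (g.symm x) h1 h2
      have heq : ⟪Aeq y, g.symm x⟫ = ⟪y, x⟫ := by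
        show ⟪A y, g.symm x⟫ = ⟪y, x⟫
        rw [hA, LinearMap.adjoint_inner_left]
        simp only [LinearEquiv.coe_coe, LinearEquiv.apply_symm_apply]
      rwa [heq] at this
    · intro hy x hx hx0
      have h1 : g x ∈ closure Ω := hgc x hx
      have h2 : g x ≠ 0 := by simpa using hx0
      have := hy (g x) h1 h2
      have heq : ⟪Aeq y, x⟫ = ⟪y, g x⟫ := by
        show ⟪A y, x⟫ = ⟪y, g x⟫
        rw [hA, LinearMap.adjoint_inner_left]
        simp only [LinearEquiv.coe_coe]
      rwa [← heq] at this
  -- change of variables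
  have hinner : ∀ y : EuclideanSpace ℝ (Fin n), ⟪g ω, y⟫ = ⟪ω, Aeq y⟫ := by
    intro y
    show ⟪g ω, y⟫ = ⟪ω, A y⟫
    rw [hA, LinearMap.adjoint_inner_right]
    simp only [LinearEquiv.coe_coe]
  have hmeq : Measure.map (⇑Aeq) (volume : Measure (EuclideanSpace ℝ (Fin n)))
      = ENNReal.ofReal |(LinearMap.det A)⁻¹| • (volume : Measure (EuclideanSpace ℝ (Fin n))) :=
    Measure.map_linearMap_addHaar_eq_smul_addHaar volume hdetA0
  let e : EuclideanSpace ℝ (Fin n) ≃ᵐ EuclideanSpace ℝ (Fin n) :=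
    Aeq.toContinuousLinearEquiv.toHomeomorph.toMeasurableEquiv
  have hec : ⇑e = ⇑Aeq := rfl
  calc charFun Ω (g ω)
      = ∫ y in openDualCone Ω, Real.exp (-⟪ω, Aeq y⟫) := by
        unfold _root_.charFun
        congr 1
        ext y
        rw [hinner]
    _ = ∫ y in ⇑e ⁻¹' openDualCone Ω, Real.exp (-⟪ω, e y⟫) := by
        rw [hec, hpre]
    _ = ∫ y in openDualCone Ω, Real.exp (-⟪ω, y⟫)
          ∂(Measure.map (⇑e) (volume : Measure (EuclideanSpace ℝ (Fin n)))) :=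
        (setIntegral_map_equiv e (fun y => Real.exp (-⟪ω, y⟫)) (openDualCone Ω)).symm
    _ = |LinearMap.det (g : EuclideanSpace ℝ (Fin n) →ₗ[ℝ] EuclideanSpace ℝ (Fin n))|⁻¹ *
          ∫ y in openDualCone Ω, Real.exp (-⟪ω, y⟫) := by
        rw [hec, hmeq, Measure.restrict_smul, integral_smul_measure,
          ENNReal.toReal_ofReal (abs_nonneg _), abs_inv, hdetA, smul_eq_mul]
    _ = _ := rfl
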